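/- Let G = C_3 be a cyclic group of order 3. The set of tame degrees of the monoid of zero-sum sequences B(C_3) is Ta(C_3) = {3}. -/
import Mathlib


/-- A minimal zero-sum sequence over the abelian group `G`: a nonempty zero-sum
multiset none of whose proper nonempty sub-multisets has sum zero. -/
def IsMinZeroSum {G : Type*} [AddCommGroup G] (S : Multiset G) : Prop :=
  S ≠ 0 ∧ S.sum = 0 ∧ ∀ T ≤ S, T ≠ 0 → T.sum = 0 → T = S

/-- A factorization of a zero-sum sequence `B` into atoms of `B(G)`. -/
def IsFactorization {G : Type*} [AddCommGroup G] (B : Multiset G)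
    (z : Multiset (Multiset G)) : Prop :=
  (∀ A ∈ z, IsMinZeroSum A) ∧ z.sum = B

/-- The usual distance between two factorizations. -/
noncomputable def factDist {G : Type*} [AddCommGroup G] (z z' : Multiset (Multiset G)) : ℕ :=
  letI := Classical.decEq (Multiset G)
  max (z - z').card (z' - z).card

/-- The catenary degree of `B ∈ B(G)`: the least `N` such that any two factorizations
of `B` can be concatenated by a chain of factorizations with consecutive distances `≤ N`. -/
noncomputable def catenaryDeg {G : Type*} [AddCommGroup G] (B : Multiset G) : ℕ :=
  sInf {N : ℕ | ∀ z z', IsFactorization B z → IsFactorization B z' →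
    Relation.ReflTransGen (fun x y => IsFactorization B y ∧ factDist x y ≤ N) z z'}

/-- The tame degree `t(A, U)` of `A ∈ B(G)` with respect to the atom `U`. -/
noncomputable def tameDeg {G : Type*} [AddCommGroup G] (A U : Multiset G) : ℕ :=
  sInf {N : ℕ | ∀ z, IsFactorization A z →
    (∃ z', IsFactorization A z' ∧ U ∈ z') →
    ∃ z', IsFactorization A z' ∧ U ∈ z' ∧ factDist z z' ≤ N}

/-- The set of (positive) tame degrees of `B(G)`. -/
noncomputable def TaSet (G : Type*) [AddCommGroup G] : Set ℕ :=
  {n | 0 < n ∧ ∃ A U : Multiset G, A.sum = 0 ∧ IsMinZeroSum U ∧ tameDeg A U = n}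

/-- The Davenport constant of `G`: the supremum of lengths of minimal zero-sum sequences. -/
noncomputable def davenport (G : Type*) [AddCommGroup G] : ℕ :=
  sSup {n : ℕ | ∃ A : Multiset G, IsMinZeroSum A ∧ A.card = n}

namespace Stmt11Aux
abbrev G := ZMod 3
def O : Multiset G := {0}
def X : Multiset G := Multiset.replicate 3 1
def Y : Multiset G := Multiset.replicate 3 2
def Z : Multiset G := {1, 2}

lemma neOX : O ≠ X := by decide
lemma neOY : O ≠ Y := by decide
lemma neOZ : O ≠ Z := by decide
lemma neXY : X ≠ Y := by decide
lemma neXZ : X ≠ Z := by decide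
lemma neYZ : Y ≠ Z := by decide

lemma minzs_iff (S : Multiset G) :
    IsMinZeroSum S ↔ S ≠ 0 ∧ S.sum = 0 ∧ ∀ T ∈ S.powerset, T ≠ 0 → T.sum = 0 → T = S := by
  unfold IsMinZeroSum
  simp [Multiset.mem_powerset]

lemma atom_O : IsMinZeroSum O := by rw [minzs_iff]; decide
lemma atom_X : IsMinZeroSum X := by rw [minzs_iff]; decide
lemma atom_Y : IsMinZeroSum Y := by rw [minzs_iff]; decide
lemma atom_Z : IsMinZeroSum Z := by rw [minzs_iff]; decide

lemma g_cases (g : G) : g = 0 ∨ g = 1 ∨ g = 2 := by revert g; decide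

lemma atom_classify {U : Multiset G} (h : IsMinZeroSum U) :
    U = O ∨ U = X ∨ U = Y ∨ U = Z := by
  obtain ⟨hne, hsum, hmin⟩ := h
  by_cases h0 : (0 : G) ∈ U
  · left
    have hle : (O : Multiset G) ≤ U := by
      rw [show O = ({0} : Multiset G) from rfl, Multiset.singleton_le]; exact h0
    exact (hmin O hle (by decide) (by decide)).symm
  by_cases h1 : (1 : G) ∈ U <;> by_cases h2 : (2 : G) ∈ U
  · right; right; right
    have hle : Z ≤ U := by
      rw [Multiset.le_iff_count]
      intro a
      rcases g_cases a with rfl | rfl | rfl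
      · rw [show Multiset.count (0:G) Z = 0 by decide]; exact Nat.zero_le _
      · rw [show Multiset.count (1:G) Z = 1 by decide]
        exact Multiset.one_le_count_iff_mem.mpr h1
      · rw [show Multiset.count (2:G) Z = 1 by decide]
        exact Multiset.one_le_count_iff_mem.mpr h2
    exact (hmin Z hle (by decide) (by decide)).symm
  · right; left
    have hrep : U = Multiset.replicate U.card 1 := by
      rw [Multiset.eq_replicate_card]
      intro b hb
      rcases g_cases b with rfl | rfl | rfl
      · exact absurd hb h0
      · rfl
      · exact absurd hb h2
    have hcard : (U.card : G) = 0 := by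
      have hs := hsum
      rw [hrep, Multiset.sum_replicate, nsmul_eq_mul, mul_one] at hs
      exact hs
    have h3 : (3 : ℕ) ∣ U.card := by
      rwa [ZMod.natCast_eq_zero_iff] at hcard
    have hc0 : U.card ≠ 0 := by
      simp only [ne_eq, Multiset.card_eq_zero]; exact hne
    have hle : X ≤ U := by
      rw [hrep]; exact (Multiset.replicate_le_replicate 1).2 (by omega)
    exact (hmin X hle (by decide) (by decide)).symm
  · right; right; left
    have hrep : U = Multiset.replicate U.card 2 := by
      rw [Multiset.eq_replicate_card]
      intro b hb
      rcases g_cases b with rfl | rfl | rfl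
      · exact absurd hb h0
      · exact absurd hb h1
      · rfl
    have hcard : (U.card : G) = 0 := by
      have hs := hsum
      rw [hrep, Multiset.sum_replicate, nsmul_eq_mul] at hs
      have h4 : (U.card : G) * 4 = (U.card : G) := by
        rw [show (4:G) = 1 by decide, mul_one]
      calc (U.card : G) = ((U.card : G) * 2) * 2 := by
            rw [mul_assoc, show (2:G)*2 = 4 by decide, h4]
        _ = 0 := by rw [hs, zero_mul]
    have h3 : (3 : ℕ) ∣ U.card := by
      rwa [ZMod.natCast_eq_zero_iff] at hcard
    have hc0 : U.card ≠ 0 := by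
      simp only [ne_eq, Multiset.card_eq_zero]; exact hne
    have hle : Y ≤ U := by
      rw [hrep]; exact (Multiset.replicate_le_replicate 2).2 (by omega)
    exact (hmin Y hle (by decide) (by decide)).symm
  · exfalso
    apply hne
    rw [Multiset.eq_zero_iff_forall_notMem]
    intro b hb
    rcases g_cases b with rfl | rfl | rfl
    · exact h0 hb
    · exact h1 hb
    · exact h2 hb

def F (a x y w : ℕ) : Multiset (Multiset G) :=
  Multiset.replicate a O + Multiset.replicate x X +
  Multiset.replicate y Y + Multiset.replicate w Z

lemma F_count_O [DecidableEq (Multiset G)] (a x y w : ℕ) : (F a x y w).count O = a := by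
  simp [F, Multiset.count_replicate, neOX.symm, neOY.symm, neOZ.symm]
lemma F_count_X [DecidableEq (Multiset G)] (a x y w : ℕ) : (F a x y w).count X = x := by
  simp [F, Multiset.count_replicate, neOX, neXY.symm, neXZ.symm]
lemma F_count_Y [DecidableEq (Multiset G)] (a x y w : ℕ) : (F a x y w).count Y = y := by
  simp [F, Multiset.count_replicate, neOY, neXY, neYZ.symm]
lemma F_count_Z [DecidableEq (Multiset G)] (a x y w : ℕ) : (F a x y w).count Z = w := by
  simp [F, Multiset.count_replicate, neOZ, neXZ, neYZ]

lemma F_count_other [DecidableEq (Multiset G)] (a x y w : ℕ) {m : Multiset G}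
    (hm : m ≠ O ∧ m ≠ X ∧ m ≠ Y ∧ m ≠ Z) : (F a x y w).count m = 0 := by
  simp [F, Multiset.count_replicate, (hm.1).symm, (hm.2.1).symm, (hm.2.2.1).symm,
    (hm.2.2.2).symm]

lemma F_sum_count0 (a x y w : ℕ) : (F a x y w).sum.count (0:G) = a := by
  simp [F, Multiset.sum_replicate, Multiset.count_nsmul,
    show (O.count (0:G)) = 1 by decide, show (X.count (0:G)) = 0 by decide,
    show (Y.count (0:G)) = 0 by decide, show (Z.count (0:G)) = 0 by decide]
lemma F_sum_count1 (a x y w : ℕ) : (F a x y w).sum.count (1:G) = 3*x + w := by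
  simp [F, Multiset.sum_replicate, Multiset.count_nsmul,
    show (O.count (1:G)) = 0 by decide, show (X.count (1:G)) = 3 by decide,
    show (Y.count (1:G)) = 0 by decide, show (Z.count (1:G)) = 1 by decide]
  ring
lemma F_sum_count2 (a x y w : ℕ) : (F a x y w).sum.count (2:G) = 3*y + w := by
  simp [F, Multiset.sum_replicate, Multiset.count_nsmul,
    show (O.count (2:G)) = 0 by decide, show (X.count (2:G)) = 0 by decide,
    show (Y.count (2:G)) = 3 by decide, show (Z.count (2:G)) = 1 by decide]
  ring

lemma sum_ext {B B' : Multiset G} (h0 : B.count 0 = B'.count 0)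
    (h1 : B.count 1 = B'.count 1) (h2 : B.count 2 = B'.count 2) : B = B' := by
  ext g
  rcases g_cases g with rfl | rfl | rfl
  exacts [h0, h1, h2]

lemma F_sub_card [DecidableEq (Multiset G)] (a x y w a' x' y' w' : ℕ) :
    (F a x y w - F a' x' y' w').card = (a-a') + (x-x') + (y-y') + (w-w') := by
  have h : F a x y w - F a' x' y' w' = F (a-a') (x-x') (y-y') (w-w') := by
    ext m
    rw [Multiset.count_sub]
    by_cases hO : m = O
    · subst hO; rw [F_count_O, F_count_O, F_count_O]
    by_cases hX : m = X
    · subst hX; rw [F_count_X, F_count_X, F_count_X]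
    by_cases hY : m = Y
    · subst hY; rw [F_count_Y, F_count_Y, F_count_Y]
    by_cases hZ : m = Z
    · subst hZ; rw [F_count_Z, F_count_Z, F_count_Z]
    · rw [F_count_other _ _ _ _ ⟨hO, hX, hY, hZ⟩, F_count_other _ _ _ _ ⟨hO, hX, hY, hZ⟩,
        F_count_other _ _ _ _ ⟨hO, hX, hY, hZ⟩]
  rw [h]
  simp [F]

lemma mem_F_iff_O [DecidableEq (Multiset G)] (a x y w : ℕ) : O ∈ F a x y w ↔ 0 < a := by
  rw [← Multiset.count_pos, F_count_O]
lemma mem_F_iff_X [DecidableEq (Multiset G)] (a x y w : ℕ) : X ∈ F a x y w ↔ 0 < x := by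
  rw [← Multiset.count_pos, F_count_X]
lemma mem_F_iff_Y [DecidableEq (Multiset G)] (a x y w : ℕ) : Y ∈ F a x y w ↔ 0 < y := by
  rw [← Multiset.count_pos, F_count_Y]
lemma mem_F_iff_Z [DecidableEq (Multiset G)] (a x y w : ℕ) : Z ∈ F a x y w ↔ 0 < w := by
  rw [← Multiset.count_pos, F_count_Z]

lemma F_fact (a x y w : ℕ) : ∀ A ∈ F a x y w, IsMinZeroSum A := by
  intro A hA
  simp only [F, Multiset.mem_add] at hA
  rcases hA with ((hA | hA) | hA) | hA <;>
    rw [Multiset.eq_of_mem_replicate hA]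
  exacts [atom_O, atom_X, atom_Y, atom_Z]

lemma fact_eq_F [DecidableEq (Multiset G)] {f : Multiset (Multiset G)}
    (hf : ∀ A ∈ f, IsMinZeroSum A) :
    f = F (f.count O) (f.count X) (f.count Y) (f.count Z) := by
  ext m
  by_cases hO : m = O
  · subst hO; rw [F_count_O]
  by_cases hX : m = X
  · subst hX; rw [F_count_X]
  by_cases hY : m = Y
  · subst hY; rw [F_count_Y]
  by_cases hZ : m = Z
  · subst hZ; rw [F_count_Z]
  · rw [F_count_other _ _ _ _ ⟨hO, hX, hY, hZ⟩, Multiset.count_eq_zero]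
    intro hm
    rcases atom_classify (hf m hm) with h | h | h | h
    exacts [hO h, hX h, hY h, hZ h]

lemma F_isFact {A : Multiset G} (a x y w : ℕ)
    (h0 : A.count 0 = a) (h1 : A.count 1 = 3*x + w) (h2 : A.count 2 = 3*y + w) :
    IsFactorization A (F a x y w) := by
  refine ⟨F_fact a x y w, ?_⟩
  exact sum_ext (by rw [F_sum_count0, h0]) (by rw [F_sum_count1, h1]) (by rw [F_sum_count2, h2])

lemma factDist_self (z : Multiset (Multiset G)) : factDist z z = 0 := by
  classical
  unfold factDist
  have : ∀ (inst : DecidableEq (Multiset G)), (z - z : Multiset (Multiset G)) = 0 := by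
    intro inst
    ext m
    rw [Multiset.count_sub]
    simp
  simp [this]

lemma factDist_F (a x y w a' x' y' w' : ℕ) :
    factDist (F a x y w) (F a' x' y' w') =
      max ((a-a') + (x-x') + (y-y') + (w-w')) ((a'-a) + (x'-x) + (y'-y) + (w'-w)) := by
  unfold factDist
  exact congrArg₂ max (@F_sub_card (Classical.decEq _) a x y w a' x' y' w') (@F_sub_card (Classical.decEq _) a' x' y' w' a x y w)

lemma fact_counts [DecidableEq (Multiset G)] {A : Multiset G} {z : Multiset (Multiset G)}
    (hz : IsFactorization A z) :
    z = F (z.count O) (z.count X) (z.count Y) (z.count Z) ∧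
    A.count 0 = z.count O ∧ A.count 1 = 3 * z.count X + z.count Z ∧
    A.count 2 = 3 * z.count Y + z.count Z := by
  have hd := fact_eq_F hz.1
  have hA : A = (F (z.count O) (z.count X) (z.count Y) (z.count Z)).sum :=
    hz.2.symm.trans (congrArg Multiset.sum hd)
  exact ⟨hd, by rw [hA, F_sum_count0], by rw [hA, F_sum_count1], by rw [hA, F_sum_count2]⟩

lemma tame3 {A U : Multiset G} (hU : IsMinZeroSum U)
    (hex0 : ∃ z, IsFactorization A z ∧ U ∉ z)
    (hex1 : ∃ z, IsFactorization A z ∧ U ∈ z) : tameDeg A U = 3 := by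
  classical
  obtain ⟨z0, hz0, hUz0⟩ := hex0
  obtain ⟨zw, hzw, hUzw⟩ := hex1
  obtain ⟨hdw, hw0, hw1, hw2⟩ := fact_counts hzw
  set a'' := zw.count O with ha''
  set x'' := zw.count X with hx''
  set y'' := zw.count Y with hy''
  set w'' := zw.count Z with hw''
  -- the key construction
  have key : ∀ z, IsFactorization A z → U ∉ z →
      ∃ z', IsFactorization A z' ∧ U ∈ z' ∧ factDist z z' = 3 := by
    intro z hz hUz
    obtain ⟨hd, h0, h1, h2⟩ := fact_counts hz
    set a := z.count O with ha
    set x := z.count X with hx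
    set y := z.count Y with hy
    set w := z.count Z with hww
    rcases atom_classify hU with rfl | rfl | rfl | rfl
    · exfalso
      apply hUz
      rw [hd, mem_F_iff_O]
      have : 0 < a'' := by rw [← mem_F_iff_O a'' x'' y'' w'', ← hdw]; exact hUzw
      omega
    · -- U = X
      have hxz : x = 0 := by
        by_contra hcon
        exact hUz (by rw [hd, mem_F_iff_X]; omega)
      have hx''pos : 0 < x'' := by rw [← mem_F_iff_X a'' x'' y'' w'', ← hdw]; exact hUzw
      have hwge : 3 ≤ w := by omega
      refine ⟨F a 1 (y+1) (w-3), F_isFact _ _ _ _ (by omega) (by omega) (by omega),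
        (mem_F_iff_X _ _ _ _).2 (by omega), ?_⟩
      rw [hd, hxz, factDist_F]
      omega
    · -- U = Y
      have hyz : y = 0 := by
        by_contra hcon
        exact hUz (by rw [hd, mem_F_iff_Y]; omega)
      have hy''pos : 0 < y'' := by rw [← mem_F_iff_Y a'' x'' y'' w'', ← hdw]; exact hUzw
      have hwge : 3 ≤ w := by omega
      refine ⟨F a (x+1) 1 (w-3), F_isFact _ _ _ _ (by omega) (by omega) (by omega),
        (mem_F_iff_Y _ _ _ _).2 (by omega), ?_⟩
      rw [hd, hyz, factDist_F]
      omega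
    · -- U = Z
      have hwz : w = 0 := by
        by_contra hcon
        exact hUz (by rw [hd, mem_F_iff_Z]; omega)
      have hw''pos : 0 < w'' := by rw [← mem_F_iff_Z a'' x'' y'' w'', ← hdw]; exact hUzw
      have hxpos : 0 < x := by omega
      have hypos : 0 < y := by omega
      refine ⟨F a (x-1) (y-1) 3, F_isFact _ _ _ _ (by omega) (by omega) (by omega),
        (mem_F_iff_Z _ _ _ _).2 (by omega), ?_⟩
      rw [hd, hwz, factDist_F]
      omega
  -- lower bound on distances
  have lb : ∀ z z', IsFactorization A z → IsFactorization A z' → U ∉ z → U ∈ z' →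
      3 ≤ factDist z z' := by
    intro z z' hz hz' hUz hUz'
    obtain ⟨hd, h0, h1, h2⟩ := fact_counts hz
    obtain ⟨hd', h0', h1', h2'⟩ := fact_counts hz'
    set a := z.count O; set x := z.count X; set y := z.count Y; set w := z.count Z
    set a' := z'.count O; set x' := z'.count X; set y' := z'.count Y; set w' := z'.count Z
    rw [hd, hd', factDist_F]
    rcases atom_classify hU with rfl | rfl | rfl | rfl
    · exfalso
      apply hUz
      have : 0 < a' := by rw [← mem_F_iff_O a' x' y' w', ← hd']; exact hUz'
      rw [hd, mem_F_iff_O]; omega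
    · have hxz : x = 0 := by
        by_contra hcon; exact hUz (by rw [hd, mem_F_iff_X]; omega)
      have : 0 < x' := by rw [← mem_F_iff_X a' x' y' w', ← hd']; exact hUz'
      omega
    · have hyz : y = 0 := by
        by_contra hcon; exact hUz (by rw [hd, mem_F_iff_Y]; omega)
      have : 0 < y' := by rw [← mem_F_iff_Y a' x' y' w', ← hd']; exact hUz'
      omega
    · have hwz : w = 0 := by
        by_contra hcon; exact hUz (by rw [hd, mem_F_iff_Z]; omega)
      have : 0 < w' := by rw [← mem_F_iff_Z a' x' y' w', ← hd']; exact hUz'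
      omega
  have mem3 : (3:ℕ) ∈ {N : ℕ | ∀ z, IsFactorization A z →
      (∃ z', IsFactorization A z' ∧ U ∈ z') →
      ∃ z', IsFactorization A z' ∧ U ∈ z' ∧ factDist z z' ≤ N} := by
    intro z hz _
    by_cases hUz : U ∈ z
    · exact ⟨z, hz, hUz, by rw [factDist_self]; omega⟩
    · obtain ⟨z', hz', hUz', hdist⟩ := key z hz hUz
      exact ⟨z', hz', hUz', by omega⟩
  refine le_antisymm (Nat.sInf_le mem3) (le_csInf ⟨3, mem3⟩ ?_)
  intro N hN
  obtain ⟨z', hz', hUz', hdist⟩ := hN z0 hz0 ⟨zw, hzw, hUzw⟩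
  exact le_trans (lb z0 z' hz0 hz' hUz0 hUz') hdist

lemma tame0 {A U : Multiset G}
    (h : ¬((∃ z, IsFactorization A z ∧ U ∉ z) ∧ (∃ z, IsFactorization A z ∧ U ∈ z))) :
    tameDeg A U = 0 := by
  unfold tameDeg
  rw [Nat.sInf_eq_zero]
  left
  intro z hz hex
  refine ⟨z, hz, ?_, ?_⟩
  · by_contra hU
    exact h ⟨⟨z, hz, hU⟩, hex⟩
  · rw [factDist_self]

end Stmt11Aux

theorem stmt11 : TaSet (ZMod 3) = {3} := by
  classical
  open Stmt11Aux in
  ext n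
  simp only [TaSet, Set.mem_setOf_eq, Set.mem_singleton_iff]
  constructor
  · rintro ⟨hn, A, U, hA, hU, ht⟩
    by_cases hc : (∃ z, IsFactorization A z ∧ U ∉ z) ∧ (∃ z, IsFactorization A z ∧ U ∈ z)
    · rw [← ht, Stmt11Aux.tame3 hU hc.1 hc.2]
    · rw [Stmt11Aux.tame0 hc] at ht; omega
  · rintro rfl
    refine ⟨by norm_num, Stmt11Aux.X + Stmt11Aux.Y, Stmt11Aux.X, by decide,
      Stmt11Aux.atom_X, Stmt11Aux.tame3 Stmt11Aux.atom_X ?_ ?_⟩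
    · refine ⟨Stmt11Aux.F 0 0 0 3, Stmt11Aux.F_isFact 0 0 0 3 (by decide) (by decide) (by decide), ?_⟩
      rw [Stmt11Aux.mem_F_iff_X]
      omega
    · exact ⟨Stmt11Aux.F 0 1 1 0, Stmt11Aux.F_isFact 0 1 1 0 (by decide) (by decide) (by decide),
        (Stmt11Aux.mem_F_iff_X 0 1 1 0).2 (by omega)⟩
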